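/- Fix an integer n ≥ 2. Let h ∈ Homeo₊(ℝ) and suppose there exists a compact set K ⊆ ℝ such that h commutes with u ∘ h ∘ u⁻¹ for every u ∈ BS(1,n) with u(K) ∩ K = ∅. Suppose moreover that the support of h is not compact. Then h has no fixed points, i.e. h(x) ≠ x for every x ∈ ℝ. -/

import Mathlib

open Set Topology

/-- The group of self-homeomorphisms of `X`, with `(f * g) x = f (g x)`. -/
instance {X : Type*} [TopologicalSpace X] : Group (X ≃ₜ X) where
  mul f g := g.trans f
  one := Homeomorph.refl X
  inv := Homeomorph.symm
  mul_assoc _ _ _ := Homeomorph.ext fun _ => rfl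
  one_mul _ := Homeomorph.ext fun _ => rfl
  mul_one _ := Homeomorph.ext fun _ => rfl
  inv_mul_cancel f := Homeomorph.ext fun x => f.symm_apply_apply x

/-- The support of a homeomorphism: the closure of the set of non-fixed points. -/
def Supp (f : ℝ ≃ₜ ℝ) : Set ℝ := closure {x | f x ≠ x}

/-- The homeomorphism `x ↦ n·x` of `ℝ`. -/
noncomputable def dilation (n : ℕ) (hn : 2 ≤ n) : ℝ ≃ₜ ℝ :=
  Homeomorph.mulLeft₀ (n : ℝ) (by positivity)

/-- The homeomorphism `x ↦ x + t` of `ℝ`. -/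
noncomputable def translation (t : ℝ) : ℝ ≃ₜ ℝ := Homeomorph.addRight t

/-- The standard affine Baumslag–Solitar group `BS(1,n)`, generated by `x ↦ n·x`
and `x ↦ x + 1`, as a subgroup of the homeomorphism group of `ℝ`. -/
noncomputable def BSgroup (n : ℕ) (hn : 2 ≤ n) : Subgroup (ℝ ≃ₜ ℝ) :=
  Subgroup.closure {dilation n hn, translation 1}


-- basic apply lemmas
lemma hmul_apply (f g : ℝ ≃ₜ ℝ) (x : ℝ) : (f * g) x = f (g x) := rfl
lemma hinv_def (f : ℝ ≃ₜ ℝ) : f⁻¹ = f.symm := rfl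
lemma hone_apply (x : ℝ) : (1 : ℝ ≃ₜ ℝ) x = x := rfl
lemma dilation_apply (n : ℕ) (hn : 2 ≤ n) (x : ℝ) : dilation n hn x = n * x := rfl
lemma translation_apply (t x : ℝ) : translation t x = x + t := rfl

lemma npos (n : ℕ) (hn : 2 ≤ n) : (0:ℝ) < n := by positivity
lemma none_lt (n : ℕ) (hn : 2 ≤ n) : (1:ℝ) < n := by exact_mod_cast hn.trans_lt' one_lt_two

lemma dil_pow_apply (n : ℕ) (hn : 2 ≤ n) (k : ℕ) (x : ℝ) :
    (dilation n hn ^ k) x = n ^ k * x := by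
  induction k generalizing x with
  | zero => simp [hone_apply]
  | succ k ih =>
    rw [pow_succ, hmul_apply, dilation_apply, ih, pow_succ]
    ring

lemma trans_mul (t s : ℝ) : translation t * translation s = translation (s + t) :=
  Homeomorph.ext fun x => add_assoc x s t

lemma trans_zero : translation (0:ℝ) = 1 := Homeomorph.ext fun x => add_zero x

lemma translation_int_mem (n : ℕ) (hn : 2 ≤ n) (m : ℤ) :
    translation (m : ℝ) ∈ BSgroup n hn := by
  have hb : translation 1 ∈ BSgroup n hn :=
    Subgroup.subset_closure (by simp)
  have hneg : translation (-1 : ℝ) ∈ BSgroup n hn := by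
    have : translation (-1 : ℝ) = (translation 1)⁻¹ := by
      apply eq_inv_of_mul_eq_one_left
      rw [trans_mul]; norm_num [trans_zero]
    rw [this]; exact inv_mem hb
  induction m using Int.induction_on with
  | zero => simpa [trans_zero] using (BSgroup n hn).one_mem
  | succ k ih =>
    have : translation ((k:ℝ) + 1) = translation 1 * translation (k : ℝ) := by
      rw [trans_mul]
    push_cast
    rw [this]
    exact mul_mem hb ih
  | pred k ih =>
    have : translation (-(k:ℝ) - 1) = translation (-1) * translation (-(k:ℝ)) := by
      rw [trans_mul]; ring_nf
    push_cast
    rw [this]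
    exact mul_mem hneg (by push_cast at ih ⊢; exact ih)

lemma affine_mem (n : ℕ) (hn : 2 ≤ n) (k j : ℕ) (m : ℤ) :
    ∃ u ∈ BSgroup n hn, ∀ x : ℝ, u x = n ^ k * x + m / n ^ j := by
  have ha : dilation n hn ∈ BSgroup n hn := Subgroup.subset_closure (by simp)
  refine ⟨(dilation n hn ^ j)⁻¹ * translation (m:ℝ) * dilation n hn ^ (j + k),
    mul_mem (mul_mem (inv_mem (pow_mem ha j)) (translation_int_mem n hn m)) (pow_mem ha (j+k)),
    fun x => ?_⟩
  have hnj : ((n:ℝ)) ^ j ≠ 0 := by positivity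
  have hsymm : ∀ (f : ℝ ≃ₜ ℝ) (a b : ℝ), f b = a → f.symm a = b := fun f a b hh => by
    rw [← hh, Homeomorph.symm_apply_apply]
  rw [hmul_apply, hmul_apply, dil_pow_apply, translation_apply, hinv_def]
  apply hsymm
  rw [dil_pow_apply]
  field_simp
  ring
-- density of n-adic rationals
lemma exists_nadic (n : ℕ) (hn : 2 ≤ n) (A B : ℝ) (hAB : A < B) :
    ∃ (j : ℕ) (m : ℤ), A < (m : ℝ) / n ^ j ∧ (m : ℝ) / n ^ j < B := by
  obtain ⟨j, hj⟩ := pow_unbounded_of_one_lt (1 / (B - A)) (none_lt n hn)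
  have hnj : (0:ℝ) < (n:ℝ) ^ j := by positivity
  have hBA : 0 < B - A := by linarith
  have hj' : 1 < (n:ℝ) ^ j * (B - A) := by
    rw [div_lt_iff₀ hBA] at hj; linarith
  refine ⟨j, ⌊(n:ℝ) ^ j * A⌋ + 1, ?_, ?_⟩
  · rw [lt_div_iff₀ hnj]
    have := Int.lt_floor_add_one ((n:ℝ) ^ j * A)
    push_cast
    linarith
  · rw [div_lt_iff₀ hnj]
    have := Int.floor_le ((n:ℝ) ^ j * A)
    push_cast
    nlinarith
-- core commutation lemma
lemma core (h : ℝ ≃ₜ ℝ) (hmono : StrictMono h) (u : ℝ ≃ₜ ℝ)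
    (hcomm : Commute h (u * h * u⁻¹)) (α : ℝ) (hα : h α = α) (hp : h (u α) ≠ u α) :
    ∃ w, u α < w ∧ (w = h (u α) ∨ w = h.symm (u α)) ∧ h (u.symm w) = u.symm w := by
  set g := u * h * u⁻¹ with hg
  set p := u α with hpdef
  have hgp : g p = p := by
    rw [hg, hmul_apply, hmul_apply, hinv_def, hpdef, Homeomorph.symm_apply_apply, hα]
  have key : ∀ h' : ℝ ≃ₜ ℝ, Commute h' g → h (u.symm (h' p)) = u.symm (h' p) := by
    intro h' hc
    have := congrArg (fun f : ℝ ≃ₜ ℝ => f p) hc.eq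
    simp only [hmul_apply, hgp] at this
    -- this : h' p = g (h' p)
    have hgw : g (h' p) = h' p := this.symm
    rw [hg, hmul_apply, hmul_apply, hinv_def] at hgw
    exact u.injective (by rw [Homeomorph.apply_symm_apply]; exact hgw)
  rcases hp.lt_or_gt with hlt | hlt
  · -- h p < p, use h⁻¹ : h.symm p > p
    refine ⟨h.symm p, ?_, Or.inr rfl, key h⁻¹ hcomm.inv_left⟩
    by_contra hle
    push_neg at hle
    have := hmono.monotone hle
    rw [Homeomorph.apply_symm_apply] at this
    exact absurd (this.trans_lt hlt) (lt_irrefl p)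
  · exact ⟨h p, hlt, Or.inl rfl, key h hcomm⟩
lemma main_case (n : ℕ) (hn : 2 ≤ n) (h : ℝ ≃ₜ ℝ) (hmono : StrictMono h)
    (hK : ∃ K : Set ℝ, IsCompact K ∧
      ∀ u ∈ BSgroup n hn, (u '' K) ∩ K = ∅ → Commute h (u * h * u⁻¹))
    (hub : ¬ BddAbove {x | h x ≠ x}) :
    ∀ x : ℝ, h x ≠ x := by
  intro x₀ hx₀
  obtain ⟨K, hKc, hKcomm⟩ := hK
  -- a uniform bound M for K and x₀
  obtain ⟨A, hA⟩ := hKc.bddAbove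
  obtain ⟨B, hB⟩ := hKc.bddBelow
  set M : ℝ := max (max |A| |B|) |x₀| with hM
  have hMA : ∀ x ∈ K, x ≤ M := fun x hx =>
    (hA hx).trans ((le_abs_self A).trans (le_max_of_le_left (le_max_left _ _)))
  have hMB : ∀ x ∈ K, -M ≤ x := fun x hx => by
    have := hB hx
    have : -|B| ≤ x := (neg_abs_le B).trans this
    have h2 : |B| ≤ M := le_max_of_le_left (le_max_right _ _)
    linarith
  have hMx₀ : |x₀| ≤ M := le_max_right _ _
  have hM0 : 0 ≤ M := (abs_nonneg x₀).trans hMx₀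
  have hn1 : (1:ℝ) < n := none_lt n hn
  have hFclosed : IsClosed {x : ℝ | h x = x} := isClosed_eq h.continuous continuous_id
  by_cases hc : ∃ c, h c = c ∧ M < c
  · -- Subcase (i): a fixed point above M
    obtain ⟨c, hcfix, hcM⟩ := hc
    obtain ⟨y, hyN, hy⟩ := not_bddAbove_iff.mp hub c
    set F' : Set ℝ := {x | h x = x} ∩ Icc c y with hF'
    have hF'c : IsClosed F' := hFclosed.inter isClosed_Icc
    have hF'ne : F'.Nonempty := ⟨c, hcfix, le_refl c, hy.le⟩
    have hF'bdd : BddAbove F' := ⟨y, fun z hz => hz.2.2⟩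
    set α : ℝ := sSup F' with hαdef
    have hαF' : α ∈ F' := hF'c.csSup_mem hF'ne hF'bdd
    have hαfix : h α = α := hαF'.1
    have hαc : c ≤ α := hαF'.2.1
    have hαy : α < y := lt_of_le_of_ne hαF'.2.2 (fun he => hyN (he ▸ hαfix))
    have fixfree : ∀ z, α < z → z ≤ y → h z ≠ z := by
      intro z h1 h2 hz
      have : z ∈ F' := ⟨hz, (hαc.trans h1.le), h2⟩
      exact absurd (le_csSup hF'bdd this) (not_le.mpr h1)
    -- continuity: δ₀-neighbourhood where h and h.symm stay below y
    have hsymmα : h.symm α = α := by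
      conv_lhs => rw [← hαfix]
      exact h.symm_apply_apply α
    have hVopen : IsOpen (h ⁻¹' Iio y ∩ h.symm ⁻¹' Iio y) :=
      (isOpen_Iio.preimage h.continuous).inter (isOpen_Iio.preimage h.symm.continuous)
    have hαV : α ∈ h ⁻¹' Iio y ∩ h.symm ⁻¹' Iio y := by
      constructor <;> simp [hαfix, hsymmα, hαy]
    obtain ⟨δ₀, hδ₀pos, hδ₀⟩ := Metric.isOpen_iff.mp hVopen α hαV
    set ε : ℝ := min δ₀ (y - α) with hε
    have hεpos : 0 < ε := lt_min hδ₀pos (by linarith)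
    -- choose k with n^k (α - M) > y + M
    have hαM : M < α := lt_of_lt_of_le hcM hαc
    obtain ⟨k, hk⟩ := pow_unbounded_of_one_lt ((y + M) / (α - M)) hn1
    have hαMpos : (0:ℝ) < α - M := by linarith
    have hkM : y + M < (n:ℝ) ^ k * (α - M) := by
      rw [div_lt_iff₀ hαMpos] at hk; linarith
    have hnk1 : (1:ℝ) ≤ (n:ℝ) ^ k := one_le_pow₀ hn1.le
    have hnkpos : (0:ℝ) < (n:ℝ) ^ k := by positivity
    -- choose t n-adic in (α - n^k α, α - n^k α + ε)
    obtain ⟨j, m, ht1, ht2⟩ := exists_nadic n hn (α - (n:ℝ)^k * α) (α - (n:ℝ)^k * α + ε)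
      (by linarith)
    set t : ℝ := (m : ℝ) / n ^ j with htdef
    set δ : ℝ := t - (α - (n:ℝ)^k * α) with hδdef
    have hδpos : 0 < δ := by simp only [hδdef]; linarith
    have hδε : δ < ε := by simp only [hδdef]; linarith
    obtain ⟨u, humem, huapp⟩ := affine_mem n hn k j m
    -- image of K lies below -M
    have himg : ∀ x ∈ K, u x < -M := by
      intro x hx
      rw [huapp]
      have hx1 := hMA x hx
      have h1 : (n:ℝ)^k * x ≤ (n:ℝ)^k * M := by nlinarith
      have h2 : t < α - (n:ℝ)^k * α + ε := ht2
      have h3 : ε ≤ y - α := min_le_right _ _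
      nlinarith
    have hdisj : (u '' K) ∩ K = ∅ := by
      rw [eq_empty_iff_forall_notMem]
      rintro z ⟨⟨x, hx, rfl⟩, hzK⟩
      exact absurd (hMB _ hzK) (not_le.mpr (himg x hx))
    have hcomm := hKcomm u humem hdisj
    -- p = u α = α + δ
    have hpval : u α = α + δ := by rw [huapp]; simp only [hδdef]; ring
    have hpy : u α < y := by
      rw [hpval]
      have : ε ≤ y - α := min_le_right _ _
      linarith
    have hpfix : h (u α) ≠ u α := fixfree _ (by rw [hpval]; linarith) hpy.le
    obtain ⟨w, hw1, hw2, hw3⟩ := core h hmono u hcomm α hαfix hpfix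
    -- w < y
    have hpball : u α ∈ Metric.ball α δ₀ := by
      rw [hpval, Metric.mem_ball]
      have : ε ≤ δ₀ := min_le_left _ _
      rw [Real.dist_eq, abs_of_nonneg (by linarith : (0:ℝ) ≤ α + δ - α)]
      linarith
    have hwy : w < y := by
      have := hδ₀ hpball
      rcases hw2 with rfl | rfl
      · exact this.1
      · exact this.2
    -- u.symm w = α + (w - u α)/n^k ∈ (α, y]
    have hnk0 : ((n:ℝ))^k ≠ 0 := ne_of_gt hnkpos
    have husymm : u.symm w = (w - t) / (n:ℝ)^k := by
      apply u.injective
      rw [Homeomorph.apply_symm_apply, huapp, ← htdef]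
      field_simp
      ring
    have huα : u α = (n:ℝ)^k * α + t := huapp α
    have hgt : α < u.symm w := by
      rw [husymm, lt_div_iff₀ hnkpos]
      rw [huα] at hw1
      linarith
    have hle : u.symm w ≤ y := by
      rw [husymm, div_le_iff₀ hnkpos]
      have h1 : w - t = (w - u α) + (n:ℝ)^k * α := by rw [huα]; ring
      have h2 : w - u α ≤ y - α := by rw [hpval]; linarith
      have h3 : y - α ≤ (n:ℝ)^k * (y - α) := le_mul_of_one_le_left (by linarith) hnk1
      have hring : (n:ℝ)^k * (y - α) + (n:ℝ)^k * α = y * (n:ℝ)^k := by ring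
      linarith
    exact fixfree _ hgt hle hw3
  · -- Subcase (ii): all fixed points ≤ M
    push_neg at hc
    set F : Set ℝ := {x | h x = x} with hFdef
    have hFne : F.Nonempty := ⟨x₀, hx₀⟩
    have hFbdd : BddAbove F := ⟨M, fun z hz => hc z hz⟩
    set α : ℝ := sSup F with hαdef
    have hαF : α ∈ F := hFclosed.csSup_mem hFne hFbdd
    have hαfix : h α = α := hαF
    have hαM : α ≤ M := hc α hαF
    have hαx₀ : -M ≤ α := le_trans (neg_le_of_abs_le hMx₀) (le_csSup hFbdd hx₀)
    -- u x = n x + m with m > (n+1) M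
    set m : ℤ := ⌊(n + 1 : ℝ) * M⌋ + 1 with hmdef
    have hm : (n + 1 : ℝ) * M < m := by
      rw [hmdef]
      push_cast
      linarith [Int.lt_floor_add_one ((n + 1 : ℝ) * M)]
    obtain ⟨u, humem, huapp⟩ := affine_mem n hn 1 0 m
    have huapp' : ∀ x : ℝ, u x = n * x + m := by
      intro x; rw [huapp]; norm_num
    have himg : ∀ x ∈ K, M < u x := by
      intro x hx
      rw [huapp']
      have h1 := hMB x hx
      have h2 : (n:ℝ) * (-M) ≤ n * x := by nlinarith [npos n hn]
      nlinarith
    have hdisj : (u '' K) ∩ K = ∅ := by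
      rw [eq_empty_iff_forall_notMem]
      rintro z ⟨⟨x, hx, rfl⟩, hzK⟩
      exact absurd (hMA _ hzK) (not_le.mpr (himg x hx))
    have hcomm := hKcomm u humem hdisj
    have hpα : α < u α := by
      rw [huapp']
      have h2 : (n:ℝ) * (-M) ≤ n * α := by nlinarith [npos n hn]
      nlinarith
    have hpfix : h (u α) ≠ u α := by
      intro hfix
      exact absurd (le_csSup hFbdd hfix) (not_le.mpr hpα)
    obtain ⟨w, hw1, hw2, hw3⟩ := core h hmono u hcomm α hαfix hpfix
    have husymm : u.symm w = (w - m) / (n:ℝ) := by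
      apply u.injective
      rw [Homeomorph.apply_symm_apply, huapp']
      field_simp
      ring
    have hgt : α < u.symm w := by
      rw [husymm, lt_div_iff₀ (npos n hn)]
      rw [huapp'] at hw1
      linarith
    exact absurd (le_csSup hFbdd hw3) (not_le.mpr hgt)
section reflection
noncomputable def ν : ℝ ≃ₜ ℝ := Homeomorph.neg ℝ

lemma nu_apply (x : ℝ) : ν x = -x := rfl
lemma nu_symm_apply (x : ℝ) : ν.symm x = -x := rfl
lemma nu_inv : ν⁻¹ = ν := by
  apply inv_eq_of_mul_eq_one_right
  exact Homeomorph.ext fun x => neg_neg x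

lemma conj_mem (n : ℕ) (hn : 2 ≤ n) (u : ℝ ≃ₜ ℝ) (hu : u ∈ BSgroup n hn) :
    ν⁻¹ * u * ν ∈ BSgroup n hn := by
  have key : (BSgroup n hn).map (MulAut.conj ν⁻¹).toMonoidHom ≤ BSgroup n hn := by
    rw [BSgroup, MonoidHom.map_closure]
    apply (Subgroup.closure_le _).mpr
    rintro x ⟨g, hg, rfl⟩
    simp only [MulAut.conj_apply, MulEquiv.coe_toMonoidHom]
    rcases hg with rfl | rfl
    · have : ν * dilation n hn * ν⁻¹ = dilation n hn := by
        rw [nu_inv]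
        exact Homeomorph.ext fun x => by
          show -((n:ℝ) * (-x)) = (n:ℝ) * x
          ring
      rw [nu_inv, this]
      exact Subgroup.subset_closure (by simp)
    · have : ν * translation 1 * ν⁻¹ = (translation 1)⁻¹ := by
        rw [nu_inv]
        apply eq_inv_of_mul_eq_one_left
        exact Homeomorph.ext fun x => by
          show -(-(x + 1) + 1) = x
          ring
      rw [nu_inv, this]
      exact inv_mem (Subgroup.subset_closure (by simp))
  have : ν⁻¹ * u * ν ∈ (BSgroup n hn).map (MulAut.conj ν⁻¹).toMonoidHom := by
    refine ⟨u, hu, ?_⟩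
    simp only [MulAut.conj_apply, MulEquiv.coe_toMonoidHom, inv_inv]
  exact key this

end reflection

theorem no_fixed_points_of_noncompact_support
    (n : ℕ) (hn : 2 ≤ n) (h : ℝ ≃ₜ ℝ) (hhmono : StrictMono h)
    (hK : ∃ K : Set ℝ, IsCompact K ∧
      ∀ u ∈ BSgroup n hn, (u '' K) ∩ K = ∅ → Commute h (u * h * u⁻¹))
    (hsupp : ¬ IsCompact (Supp h)) :
    ∀ x : ℝ, h x ≠ x := by
  have hNunb : ¬ Bornology.IsBounded {x : ℝ | h x ≠ x} := by
    intro hb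
    exact hsupp (Metric.isCompact_of_isClosed_isBounded isClosed_closure hb.closure)
  rw [isBounded_iff_bddBelow_bddAbove] at hNunb
  rcases not_and_or.mp hNunb with hbel | habv
  · -- nonfixed set unbounded below: conjugate by the reflection ν
    set H : ℝ ≃ₜ ℝ := ν * h * ν⁻¹ with hHdef
    have Happ : ∀ x : ℝ, H x = -(h (-x)) := by
      intro x
      rw [hHdef, hmul_apply, hmul_apply, hinv_def, nu_symm_apply, nu_apply]
    have hHmono : StrictMono H := by
      intro x y hxy
      rw [Happ, Happ]
      exact neg_lt_neg (hhmono (neg_lt_neg hxy))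
    obtain ⟨K, hKc, hKcomm⟩ := hK
    have hK' : ∃ K' : Set ℝ, IsCompact K' ∧
        ∀ u ∈ BSgroup n hn, (u '' K') ∩ K' = ∅ → Commute H (u * H * u⁻¹) := by
      refine ⟨Neg.neg '' K, hKc.image continuous_neg, fun u hu hdisj => ?_⟩
      set v : ℝ ≃ₜ ℝ := ν⁻¹ * u * ν with hvdef
      have hv : v ∈ BSgroup n hn := conj_mem n hn u hu
      have hvapp : ∀ x : ℝ, v x = -(u (-x)) := by
        intro x
        rw [hvdef, hmul_apply, hmul_apply, hinv_def, nu_symm_apply, nu_apply]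
      have hvdisj : (v '' K) ∩ K = ∅ := by
        rw [eq_empty_iff_forall_notMem]
        rintro z ⟨⟨x, hx, rfl⟩, hzK⟩
        have h1 : u (-x) ∈ u '' (Neg.neg '' K) := ⟨-x, ⟨x, hx, rfl⟩, rfl⟩
        have h2 : u (-x) ∈ Neg.neg '' K := by
          refine ⟨v x, hzK, ?_⟩
          rw [hvapp, neg_neg]
        rw [eq_empty_iff_forall_notMem] at hdisj
        exact hdisj _ ⟨h1, h2⟩
      have hcm : Commute h (v * h * v⁻¹) := hKcomm v hv hvdisj
      have hmap := hcm.map (MulAut.conj ν).toMonoidHom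
      simp only [MulAut.conj_apply, MulEquiv.coe_toMonoidHom] at hmap
      have e1 : ν * (v * h * v⁻¹) * ν⁻¹ = u * H * u⁻¹ := by
        rw [hHdef, hvdef]
        group
      rwa [e1] at hmap
    have hub : ¬ BddAbove {x : ℝ | H x ≠ x} := by
      rw [not_bddAbove_iff]
      intro b
      obtain ⟨z, hz, hzb⟩ := not_bddBelow_iff.mp hbel (-b)
      refine ⟨-z, ?_, by linarith⟩
      show H (-z) ≠ -z
      rw [Happ, neg_neg]
      intro he
      exact hz (neg_injective he)
    have hall := main_case n hn H hHmono hK' hub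
    intro x hx
    apply hall (-x)
    rw [Happ, neg_neg, hx]
  · exact main_case n hn h hhmono hK habv
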